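/- arXiv:1908.10035 — 2 statements merged into one kernel-verified Lean document; each statement's English description precedes it below -/
import Mathlib

section
/- Let k > 0, j₁, j₂, q₀ be real, I ⊆ ℝ an open set, and S̃ : I → ℝ differentiable. Define φ(x) = e^{k x²/2}(q₀ − x⁴) and S(x) = S̃(φ(x)) − j₁ x¹ − (2 j₁ + j₂) x² + k j₁ (x⁴ − q₀) x³ on the open set of x ∈ ℝ⁴ with φ(x) ∈ I. Then at every such x the derivatives of S along the invariant frame reproduce the canonical functions: −∂₁S = j₁; −e^{−k x²/2}(k x³ ∂₁S + ∂₄S) = S̃′(φ(x)); −e^{k x²/2} ∂₃S = k j₁ φ(x); and 2 ∂₁S − ∂₂S = j₂ − (k/2) φ(x) S̃′(φ(x)). -/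
/-- Partial derivative `∂f/∂xⁱ` of a real-valued function on `ℝ⁴`. -/
noncomputable def pd (i : Fin 4) (f : (Fin 4 → ℝ) → ℝ) (x : Fin 4 → ℝ) : ℝ :=
  fderiv ℝ f x (Pi.single i 1)

/-- The map `φ(x) = e^{k x²/2}(q₀ − x⁴)`. -/
noncomputable def φmap (k q₀ : ℝ) (x : Fin 4 → ℝ) : ℝ :=
  Real.exp (k * x 1 / 2) * (q₀ - x 3)

/-- The candidate complete integral
`S(x) = S̃(φ(x)) − j₁x¹ − (2j₁+j₂)x² + kj₁(x⁴ − q₀)x³`. -/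
noncomputable def Sfun (k j₁ j₂ q₀ : ℝ) (St : ℝ → ℝ) (x : Fin 4 → ℝ) : ℝ :=
  St (φmap k q₀ x) - j₁ * x 0 - (2 * j₁ + j₂) * x 1 + k * j₁ * (x 3 - q₀) * x 2

/-- The derivatives of `S` along the invariant frame
`ξ₁ = −∂₁`, `ξ₂ = −e^{−kx²/2}(kx³∂₁ + ∂₄)`, `ξ₃ = −e^{kx²/2}∂₃`, `ξ₄ = 2∂₁ − ∂₂`
reproduce the canonical functions `f₁ = j₁`, `f₂ = p`, `f₃ = kj₁q`, `f₄ = j₂ − (k/2)pq`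
at `q = φ(x)`, `p = S̃′(φ(x))`. -/
theorem frame_derivatives_of_S (k j₁ j₂ q₀ : ℝ) (hk : 0 < k) (I : Set ℝ) (hI : IsOpen I)
    (St : ℝ → ℝ) (hSt : ∀ q ∈ I, DifferentiableAt ℝ St q)
    (x : Fin 4 → ℝ) (hx : φmap k q₀ x ∈ I) :
    -(pd 0 (Sfun k j₁ j₂ q₀ St) x) = j₁ ∧
    -Real.exp (-(k * x 1) / 2) *
        (k * x 2 * pd 0 (Sfun k j₁ j₂ q₀ St) x + pd 3 (Sfun k j₁ j₂ q₀ St) x)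
      = deriv St (φmap k q₀ x) ∧
    -Real.exp (k * x 1 / 2) * pd 2 (Sfun k j₁ j₂ q₀ St) x = k * j₁ * φmap k q₀ x ∧
    2 * pd 0 (Sfun k j₁ j₂ q₀ St) x - pd 1 (Sfun k j₁ j₂ q₀ St) x
      = j₂ - k / 2 * φmap k q₀ x * deriv St (φmap k q₀ x) := by
  have hp := fun i : Fin 4 => hasFDerivAt_apply (𝕜 := ℝ) (F' := fun _ : Fin 4 => ℝ) i x
  have hexp := (((hp 1).const_mul k).mul_const (2:ℝ)⁻¹).exp
  have hφ : HasFDerivAt (φmap k q₀) _ x := hexp.mul ((hp 3).const_sub q₀)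
  have hSt' : HasDerivAt St (deriv St (φmap k q₀ x)) (φmap k q₀ x) := (hSt _ hx).hasDerivAt
  have hcomp := hSt'.comp_hasFDerivAt x hφ
  have hS : HasFDerivAt (Sfun k j₁ j₂ q₀ St) _ x :=
    ((hcomp.sub ((hp 0).const_mul j₁)).sub ((hp 1).const_mul (2*j₁+j₂))).add
      ((((hp 3).sub_const q₀).const_mul (k*j₁)).mul (hp 2))
  set p := deriv St (φmap k q₀ x) with hpdef
  have e0 : pd 0 (Sfun k j₁ j₂ q₀ St) x = -j₁ := by
    rw [pd, hS.fderiv]; simp [Pi.single_apply]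
  have e1 : pd 1 (Sfun k j₁ j₂ q₀ St) x
      = p * (Real.exp (k * x 1 / 2) * (q₀ - x 3) * (k / 2)) - (2*j₁+j₂) := by
    rw [pd, hS.fderiv]; simp [Pi.single_apply]; ring_nf; exact Or.inl trivial
  have e2 : pd 2 (Sfun k j₁ j₂ q₀ St) x = k * j₁ * (x 3 - q₀) := by
    rw [pd, hS.fderiv]; simp [Pi.single_apply]
  have e3 : pd 3 (Sfun k j₁ j₂ q₀ St) x = -(p * Real.exp (k * x 1 / 2)) + k * j₁ * x 2 := by
    rw [pd, hS.fderiv]; simp [Pi.single_apply]; ring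
  have hE : Real.exp (-(k * x 1) / 2) * Real.exp (k * x 1 / 2) = 1 := by
    rw [← Real.exp_add]; ring_nf; exact Real.exp_zero
  refine ⟨by rw [e0]; ring, ?_, ?_, ?_⟩
  · rw [e0, e3]
    have h : -Real.exp (-(k * x 1) / 2) *
        (k * x 2 * -j₁ + (-(p * Real.exp (k * x 1 / 2)) + k * j₁ * x 2))
        = (Real.exp (-(k * x 1) / 2) * Real.exp (k * x 1 / 2)) * p := by ring
    rw [h, hE, one_mul]
  · rw [e2]; unfold φmap; ring
  · rw [e0, e1]; unfold φmap; ring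
end

section
/- Let k > 0, j₁, j₂, m, q₀ be real, I ⊆ ℝ an open set, and S̃ : I → ℝ differentiable such that for all q ∈ I: (1 + k²q²/4) S̃′(q)² − k q (j₁ + j₂) S̃′(q) + k² j₁² q² + 2 j₁ j₂ + j₂² + m² = 0. Define φ(x) = e^{k x²/2}(q₀ − x⁴) and S(x) = S̃(φ(x)) − j₁ x¹ − (2 j₁ + j₂) x² + k j₁ (x⁴ − q₀) x³. Then at every x ∈ ℝ⁴ with φ(x) ∈ I, the function S satisfies the geodesic Hamilton–Jacobi equation of the McLenaghan–Tariq–Tupper spacetime: 2 (∂₁S)(∂₂S − 2 ∂₁S) + e^{−k x²}(k x³ ∂₁S + ∂₄S)² + e^{k x²}(∂₃S)² + (∂₂S − 2 ∂₁S)² + m² = 0. -/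
/-- If `S̃` is differentiable on the open set `I` and solves the reduced
Hamilton–Jacobi equation
`(1 + k²q²/4)S̃′(q)² − kq(j₁+j₂)S̃′(q) + k²j₁²q² + 2j₁j₂ + j₂² + m² = 0` on `I`, then at
every `x` with `φ(x) ∈ I` the function `S` satisfies the geodesic Hamilton–Jacobi equation
of the McLenaghan–Tariq–Tupper spacetime. -/
theorem geodesic_HJ_complete_integral (k j₁ j₂ m q₀ : ℝ) (hk : 0 < k)
    (I : Set ℝ) (hI : IsOpen I)
    (St : ℝ → ℝ) (hSt : ∀ q ∈ I, DifferentiableAt ℝ St q)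
    (hODE : ∀ q ∈ I,
      (1 + k ^ 2 * q ^ 2 / 4) * (deriv St q) ^ 2 - k * q * (j₁ + j₂) * deriv St q
        + k ^ 2 * j₁ ^ 2 * q ^ 2 + 2 * j₁ * j₂ + j₂ ^ 2 + m ^ 2 = 0)
    (x : Fin 4 → ℝ) (hx : φmap k q₀ x ∈ I) :
    2 * pd 0 (Sfun k j₁ j₂ q₀ St) x *
        (pd 1 (Sfun k j₁ j₂ q₀ St) x - 2 * pd 0 (Sfun k j₁ j₂ q₀ St) x)
      + Real.exp (-(k * x 1)) *
        (k * x 2 * pd 0 (Sfun k j₁ j₂ q₀ St) x + pd 3 (Sfun k j₁ j₂ q₀ St) x) ^ 2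
      + Real.exp (k * x 1) * (pd 2 (Sfun k j₁ j₂ q₀ St) x) ^ 2
      + (pd 1 (Sfun k j₁ j₂ q₀ St) x - 2 * pd 0 (Sfun k j₁ j₂ q₀ St) x) ^ 2
      + m ^ 2 = 0 := by
  have hSt' : HasDerivAt St (deriv St (φmap k q₀ x)) (φmap k q₀ x) :=
    (hSt _ hx).hasDerivAt
  set d := deriv St (φmap k q₀ x) with hd
  have hP : ∀ i : Fin 4, HasFDerivAt (fun x : Fin 4 → ℝ => x i)
      (ContinuousLinearMap.proj i : (Fin 4 → ℝ) →L[ℝ] ℝ) x :=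
    fun i => hasFDerivAt_apply i x
  have hlin : HasFDerivAt (fun x : Fin 4 → ℝ => k * x 1 / 2)
      ((k/2) • (ContinuousLinearMap.proj 1 : (Fin 4 → ℝ) →L[ℝ] ℝ)) x := by
    rw [show (fun x : Fin 4 → ℝ => k * x 1 / 2) = fun x : Fin 4 → ℝ => (k/2) * x 1 from
      funext fun y => by ring]
    exact (hP 1).const_mul (k/2)
  have hexp := hlin.exp
  have hu : HasFDerivAt (fun x : Fin 4 → ℝ => q₀ - x 3)
      ((0 : (Fin 4 → ℝ) →L[ℝ] ℝ) - ContinuousLinearMap.proj 3) x :=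
    (hasFDerivAt_const q₀ x).sub (hP 3)
  have hφ := hexp.mul hu
  have hcomp := hSt'.comp_hasFDerivAt x hφ
  have h0 := (hP 0).const_mul j₁
  have h1 := (hP 1).const_mul (2 * j₁ + j₂)
  have h2 := (((hP 3).sub_const q₀).const_mul (k * j₁)).mul (hP 2)
  have hS := ((hcomp.sub h0).sub h1).add h2
  have hS' : HasFDerivAt (Sfun k j₁ j₂ q₀ St) _ x := hS
  have hpd0 : pd 0 (Sfun k j₁ j₂ q₀ St) x = -j₁ := by
    rw [pd, hS'.fderiv]; simp [Pi.single_apply]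
  have hpd1 : pd 1 (Sfun k j₁ j₂ q₀ St) x
      = d * ((q₀ - x 3) * (Real.exp (k * x 1 / 2) * (k / 2))) - (2 * j₁ + j₂) := by
    rw [pd, hS'.fderiv]; simp [Pi.single_apply]
  have hpd2 : pd 2 (Sfun k j₁ j₂ q₀ St) x = k * j₁ * (x 3 - q₀) := by
    rw [pd, hS'.fderiv]; simp [Pi.single_apply]
  have hpd3 : pd 3 (Sfun k j₁ j₂ q₀ St) x
      = -(d * Real.exp (k * x 1 / 2)) + x 2 * (k * j₁) := by
    rw [pd, hS'.fderiv]; simp [Pi.single_apply]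
  have key := hODE _ hx
  rw [← hd] at key
  have hqe : φmap k q₀ x = Real.exp (k * x 1 / 2) * (q₀ - x 3) := rfl
  rw [hqe] at key
  have hE : Real.exp (-(k * x 1)) * (Real.exp (k * x 1 / 2)) ^ 2 = 1 := by
    rw [sq, ← Real.exp_add, ← Real.exp_add]
    norm_num
  have hE2 : Real.exp (k * x 1) = (Real.exp (k * x 1 / 2)) ^ 2 := by
    rw [sq, ← Real.exp_add]
    ring_nf
  rw [hpd0, hpd1, hpd2, hpd3, hE2]
  linear_combination key + d ^ 2 * hE
end
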